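/- arXiv:1601.05482 — 3 statements merged into one kernel-verified Lean document; each statement's English description precedes it below -/
import Mathlib

section
/- Let H be a group and J a subgroup of H that is not virtually abelian. Let {ρₙ : H → PSL(2,ℂ)} be a sequence of discrete and faithful representations which converges up to inner automorphism on J, i.e. there exist kₙ ∈ H such that {ρₙ ∘ I_{kₙ}|_J} converges pointwise to a discrete and faithful representation of J. Let {gₙ} be a sequence in PSL(2,ℂ), and suppose there exist hₙ ∈ H and a compact subset K of PSL(2,ℂ) such that ρₙ(hₙ) gₙ⁻¹ ∈ K for all n. Then, after passing to a subsequence, there exist h′ₙ ∈ H such that {(ρₙ^{gₙ}) ∘ I_{h′ₙ}|_J} converges pointwise to a discrete and faithful representation of J; that is, a subsequence of {ρₙ^{gₙ}} also converges up to inner automorphism on J. -/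
open Matrix Filter Topology

/-- `SL(2,ℂ)`. -/
abbrev SL2C := Matrix.SpecialLinearGroup (Fin 2) ℂ

/-- The topology on `SL(2,ℂ)` induced from the matrix topology. -/
noncomputable instance : TopologicalSpace SL2C :=
  TopologicalSpace.induced (fun A => (A : Matrix (Fin 2) (Fin 2) ℂ)) inferInstance

/-- `PSL(2,ℂ) = SL(2,ℂ)/{±I}`, with the quotient topology. -/
abbrev PSL2C := Matrix.ProjectiveSpecialLinearGroup (Fin 2) ℂ

/-- A representation into `PSL(2,ℂ)` is discrete and faithful if it is injective and
its image is a discrete subgroup. -/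
def IsDiscreteFaithful {G : Type*} [Group G] (ρ : G →* PSL2C) : Prop :=
  Function.Injective ρ ∧ DiscreteTopology ρ.range

/-- A group is virtually abelian if it has an abelian subgroup of finite index. -/
def VirtuallyAbelian (G : Type*) [Group G] : Prop :=
  ∃ A : Subgroup G, IsMulCommutative A ∧ A.FiniteIndex

/-- The conjugate representation `ρ^g : h ↦ g ρ(h) g⁻¹`. -/
def conjRep {G : Type*} [Group G] (g : PSL2C) (ρ : G →* PSL2C) : G →* PSL2C :=
  (MulAut.conj g).toMonoidHom.comp ρ

/-- Pointwise convergence of a sequence of representations into `PSL(2,ℂ)`. -/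
def TendstoRep {G : Type*} [Group G] (ρs : ℕ → G →* PSL2C) (ρ : G →* PSL2C) : Prop :=
  ∀ g : G, Tendsto (fun n => ρs n g) atTop (𝓝 (ρ g))

/-! ### Topological group structure -/

lemma continuous_coe_SL2C : Continuous (fun A : SL2C => (A : Matrix (Fin 2) (Fin 2) ℂ)) :=
  continuous_induced_dom

instance : IsTopologicalGroup SL2C where
  continuous_mul := by
    apply continuous_induced_rng.2
    show Continuous fun p : SL2C × SL2C => ((p.1 * p.2 : SL2C) : Matrix (Fin 2) (Fin 2) ℂ)
    have : (fun p : SL2C × SL2C => ((p.1 * p.2 : SL2C) : Matrix (Fin 2) (Fin 2) ℂ)) =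
        fun p : SL2C × SL2C =>
          ((p.1 : Matrix (Fin 2) (Fin 2) ℂ) * (p.2 : Matrix (Fin 2) (Fin 2) ℂ)) := by
      funext p; exact Matrix.SpecialLinearGroup.coe_mul _ _
    rw [this]
    exact (continuous_coe_SL2C.comp continuous_fst).matrix_mul
      (continuous_coe_SL2C.comp continuous_snd)
  continuous_inv := by
    apply continuous_induced_rng.2
    show Continuous fun A : SL2C => ((A⁻¹ : SL2C) : Matrix (Fin 2) (Fin 2) ℂ)
    have : (fun A : SL2C => ((A⁻¹ : SL2C) : Matrix (Fin 2) (Fin 2) ℂ)) =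
        fun A : SL2C => Matrix.adjugate (A : Matrix (Fin 2) (Fin 2) ℂ) := by
      funext A; exact Matrix.SpecialLinearGroup.coe_inv _
    rw [this]
    exact continuous_coe_SL2C.matrix_adjugate

instance : FirstCountableTopology (Matrix (Fin 2) (Fin 2) ℂ) :=
  inferInstanceAs (FirstCountableTopology (Fin 2 → Fin 2 → ℂ))

instance : FirstCountableTopology SL2C :=
  TopologicalSpace.firstCountableTopology_induced SL2C (Matrix (Fin 2) (Fin 2) ℂ)
    (fun A => (A : Matrix (Fin 2) (Fin 2) ℂ))

instance : IsTopologicalGroup PSL2C := inferInstance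

instance : FirstCountableTopology PSL2C := inferInstance

/-- Conjugation by `q` as a homeomorphism of `PSL(2,ℂ)`. -/
noncomputable def conjHomeo (q : PSL2C) : PSL2C ≃ₜ PSL2C :=
  (Homeomorph.mulLeft q).trans (Homeomorph.mulRight q⁻¹)

lemma conjHomeo_apply (q x : PSL2C) : conjHomeo q x = q * x * q⁻¹ := rfl

/-- A conjugate of a discrete faithful representation is discrete faithful. -/
lemma isDiscreteFaithful_conjRep {G : Type*} [Group G] {ρ : G →* PSL2C}
    (hρ : IsDiscreteFaithful ρ) (q : PSL2C) : IsDiscreteFaithful (conjRep q ρ) := by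
  obtain ⟨hinj, hdisc⟩ := hρ
  constructor
  · exact (MulAut.conj q).injective.comp hinj
  · have hrange : ((conjRep q ρ).range : Set PSL2C) = conjHomeo q '' (ρ.range : Set PSL2C) := by
      ext x
      simp only [conjRep, MonoidHom.coe_range, MonoidHom.coe_comp, Set.mem_image,
        Set.mem_range, Function.comp_apply]
      constructor
      · rintro ⟨y, rfl⟩
        exact ⟨ρ y, ⟨y, rfl⟩, rfl⟩
      · rintro ⟨z, ⟨y, rfl⟩, rfl⟩
        exact ⟨y, rfl⟩
    have e : (ρ.range : Set PSL2C) ≃ₜ ((conjRep q ρ).range : Set PSL2C) := by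
      rw [hrange]
      exact (conjHomeo q).image (ρ.range : Set PSL2C)
    exact e.symm.isEmbedding.discreteTopology

/-- Lemma "converge and basepoint", part (1). Suppose `{ρₙ}` converges up to
inner automorphism on a nonelementary subgroup `J ≤ H`, and `{gₙ}` is a sequence in `PSL(2,ℂ)`
such that `{ρₙ(hₙ)gₙ⁻¹}` lies in a compact set for some `hₙ ∈ H`. Then a subsequence of
`{ρₙ^{gₙ}}` also converges up to inner automorphism on `J`. -/
theorem subseq_converges_up_to_inner_of_bounded {H : Type*} [Group H] (J : Subgroup H)
    (hJ : ¬ VirtuallyAbelian J)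
    (ρs : ℕ → H →* PSL2C) (hρs : ∀ n, IsDiscreteFaithful (ρs n))
    (k : ℕ → H) (σ : J →* PSL2C) (hσ : IsDiscreteFaithful σ)
    (hconv : TendstoRep
      (fun n => ((ρs n).comp (MulAut.conj (k n)).toMonoidHom).comp J.subtype) σ)
    (g : ℕ → PSL2C)
    (hbdd : ∃ (h : ℕ → H) (K : Set PSL2C), IsCompact K ∧ ∀ n, ρs n (h n) * (g n)⁻¹ ∈ K) :
    ∃ φ : ℕ → ℕ, StrictMono φ ∧
      ∃ (h' : ℕ → H) (σ' : J →* PSL2C), IsDiscreteFaithful σ' ∧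
        TendstoRep (fun n =>
          ((conjRep (g (φ n)) (ρs (φ n))).comp
            (MulAut.conj (h' n)).toMonoidHom).comp J.subtype) σ' := by
  obtain ⟨h, K, hK, hmem⟩ := hbdd
  set a : ℕ → PSL2C := fun n => ρs n (h n) * (g n)⁻¹ with ha
  obtain ⟨q, hqK, φ, hφ, hlim⟩ := hK.tendsto_subseq hmem
  refine ⟨φ, hφ, fun n => (h (φ n))⁻¹ * k (φ n), conjRep q⁻¹ σ,
    isDiscreteFaithful_conjRep hσ q⁻¹, ?_⟩
  intro j
  have key : ∀ n, (((conjRep (g (φ n)) (ρs (φ n))).comp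
      (MulAut.conj ((h (φ n))⁻¹ * k (φ n))).toMonoidHom).comp J.subtype) j
      = (a (φ n))⁻¹ * (ρs (φ n) (k (φ n) * (j : H) * (k (φ n))⁻¹)) * (a (φ n)) := by
    intro n
    have harg : ((h (φ n))⁻¹ * k (φ n)) * (j : H) * ((h (φ n))⁻¹ * k (φ n))⁻¹
        = (h (φ n))⁻¹ * (k (φ n) * (j : H) * (k (φ n))⁻¹) * h (φ n) := by group
    simp only [conjRep, MonoidHom.comp_apply, MulEquiv.coe_toMonoidHom, MulAut.conj_apply,
      Subgroup.coe_subtype, ha]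
    rw [harg]
    simp only [_root_.map_mul, _root_.map_inv]
    group
  have hc : Tendsto (fun n => ρs (φ n) (k (φ n) * (j : H) * (k (φ n))⁻¹)) atTop (𝓝 (σ j)) := by
    have := (hconv j).comp hφ.tendsto_atTop
    simpa [MonoidHom.comp_apply, MulAut.conj_apply, Function.comp_def] using this
  have hgoal : Tendsto (fun n => (a (φ n))⁻¹ * (ρs (φ n) (k (φ n) * (j : H) * (k (φ n))⁻¹))
      * (a (φ n))) atTop (𝓝 (q⁻¹ * σ j * q)) :=
    (hlim.inv.mul hc).mul hlim
  have : (conjRep q⁻¹ σ) j = q⁻¹ * σ j * q := by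
    simp [conjRep, MonoidHom.comp_apply, MulAut.conj_apply]
  rw [this]
  simpa only [key] using hgoal
end

section
/- Let Γ be a discrete, torsion-free subgroup of PSL(2,ℂ), let g be a nontrivial element of Γ, let h ∈ Γ, and suppose h g^m h⁻¹ = g^n for some positive integers m and n. Then m = n and h commutes with g. In particular, a nontrivial element of a torsion-free discrete subgroup of PSL(2,ℂ) cannot have two distinct positive powers that are conjugate in the group. -/
open Matrix Filter Topology

/-! ### Auxiliary definitions and lemmas -/

abbrev M2 := Matrix (Fin 2) (Fin 2) ℂ

noncomputable def π : SL2C →* PSL2C := QuotientGroup.mk' _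

lemma pi_surj : Function.Surjective π := QuotientGroup.mk'_surjective _

lemma pi_cont : Continuous π := continuous_quot_mk

lemma center_smul {z : SL2C} (hz : z ∈ Subgroup.center SL2C) :
    ∃ ζ : ℂ, (ζ = 1 ∨ ζ = -1) ∧ (z : M2) = ζ • 1 := by
  obtain ⟨r, hr2, hr⟩ := Matrix.SpecialLinearGroup.mem_center_iff.mp hz
  refine ⟨r, ?_, ?_⟩
  · have h : (r - 1) * (r + 1) = 0 := by
      have : r ^ 2 = 1 := by simpa using hr2
      linear_combination this
    rcases mul_eq_zero.mp h with h | h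
    · left; linear_combination h
    · right; linear_combination h
  · rw [← hr, Matrix.scalar_apply, Matrix.smul_one_eq_diagonal]

/-- Cayley–Hamilton for `2 × 2` complex matrices. -/
lemma ch2 (A : M2) : A * A = Matrix.trace A • A - A.det • 1 := by
  rw [Matrix.eta_fin_two A]
  ext i j
  fin_cases i <;> fin_cases j <;>
    simp [Matrix.mul_apply, Fin.sum_univ_two, Matrix.trace_fin_two, Matrix.det_fin_two,
      Matrix.one_apply] <;> ring

/-- Cayley–Hamilton for `SL(2,ℂ)`. -/
lemma ch (G : SL2C) : (G : M2) * (G : M2) = (Matrix.trace (G : M2)) • (G : M2) - 1 := by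
  have h := ch2 (G : M2)
  rwa [show Matrix.det (G : M2) = 1 from G.2, one_smul] at h

lemma scalar_pi_one {G : SL2C} {c : ℂ} (hc : (G : M2) = c • 1) : π G = 1 := by
  have hd : Matrix.det (G : M2) = 1 := G.2
  rw [hc] at hd
  have hc2 : c ^ 2 = 1 := by
    simpa [Matrix.det_smul] using hd
  apply (QuotientGroup.eq_one_iff _).mpr
  refine Matrix.SpecialLinearGroup.mem_center_iff.mpr ⟨c, by simpa using hc2, ?_⟩
  rw [Matrix.smul_one_eq_diagonal] at hc
  rw [Matrix.scalar_apply]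
  exact hc.symm

set_option linter.unreachableTactic false in
set_option linter.unusedTactic false in
set_option linter.unnecessarySeqFocus false in
lemma commute_rep {A B : M2} (hA : ¬ ∃ c : ℂ, A = c • 1) (hAB : A * B = B * A) :
    ∃ α β : ℂ, B = α • 1 + β • A := by
  have h : ∀ i j : Fin 2, A i 0 * B 0 j + A i 1 * B 1 j = B i 0 * A 0 j + B i 1 * A 1 j := by
    intro i j
    have := congrFun (congrFun hAB i) j
    simpa [Matrix.mul_apply, Fin.sum_univ_two] using this
  by_cases hb : A 0 1 ≠ 0
  · refine ⟨B 0 0 - (B 0 1 / A 0 1) * A 0 0, B 0 1 / A 0 1, ?_⟩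
    have h00 := h 0 0
    have h01 := h 0 1
    ext i j
    fin_cases i <;> fin_cases j <;>
      simp [Matrix.one_apply] <;> field_simp <;> ring_nf <;>
      first
        | rfl
        | linear_combination h00
        | linear_combination -h00
        | linear_combination h01
        | linear_combination -h01
  · by_cases hc : A 1 0 ≠ 0
    · refine ⟨B 0 0 - (B 1 0 / A 1 0) * A 0 0, B 1 0 / A 1 0, ?_⟩
      have h10 := h 1 0
      have h11 := h 1 1
      ext i j
      fin_cases i <;> fin_cases j <;>
        simp [Matrix.one_apply] <;> field_simp <;> ring_nf <;>
        first
          | rfl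
          | linear_combination h10
          | linear_combination -h10
          | linear_combination h11
          | linear_combination -h11
    · push_neg at hb hc
      have ha : A 0 0 ≠ A 1 1 := by
        intro he
        exact hA ⟨A 0 0, by ext i j; fin_cases i <;> fin_cases j <;>
          simp [Matrix.one_apply, hb, hc, he]⟩
      have hd : A 1 1 - A 0 0 ≠ 0 := fun h0 => ha (by linear_combination -h0)
      have hB01 : B 0 1 = 0 := by
        have h01 := h 0 1
        rw [hb] at h01
        have : B 0 1 * (A 0 0 - A 1 1) = 0 := by linear_combination h01
        rcases mul_eq_zero.mp this with h0 | h0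
        · exact h0
        · exact absurd (by linear_combination h0) ha
      have hB10 : B 1 0 = 0 := by
        have h10 := h 1 0
        rw [hc] at h10
        have : B 1 0 * (A 1 1 - A 0 0) = 0 := by linear_combination h10
        rcases mul_eq_zero.mp this with h0 | h0
        · exact h0
        · exact absurd (by linear_combination h0) ha.symm
      refine ⟨B 0 0 - ((B 1 1 - B 0 0) / (A 1 1 - A 0 0)) * A 0 0,
              (B 1 1 - B 0 0) / (A 1 1 - A 0 0), ?_⟩
      ext i j
      fin_cases i <;> fin_cases j <;>
        simp [Matrix.one_apply, hb, hc, hB01, hB10] <;> field_simp <;> ring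

lemma commute_of_commute_nonscalar {A B C : M2} (hA : ¬ ∃ c : ℂ, A = c • 1)
    (hAB : A * B = B * A) (hAC : A * C = C * A) :
    B * C = C * B := by
  obtain ⟨α, β, hrep⟩ := commute_rep hA hAB
  rw [hrep, add_mul, mul_add, smul_mul_assoc, one_mul, mul_smul_comm, mul_one,
    smul_mul_assoc, mul_smul_comm, hAC]

lemma unipotent_pow {N : M2} (hN2 : N * N = 0) (k : ℕ) :
    (1 + N) ^ k = 1 + (k : ℂ) • N := by
  induction k with
  | zero => simp
  | succ k ih =>
    have h0 : (((k : ℂ)) • N) * N = 0 := by rw [smul_mul_assoc, hN2, smul_zero]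
    rw [pow_succ, ih, add_mul, one_mul, mul_add, mul_one, h0]
    push_cast
    module

lemma pow_formula {A : M2} {t : ℂ} (hch : A * A = t • A - 1)
    (u : ℕ → ℂ) (hu0 : u 0 = 0) (hu1 : u 1 = 1)
    (hrec : ∀ j, u (j + 2) = t * u (j + 1) - u j) :
    ∀ j, A ^ (j + 1) = u (j + 1) • A - u j • 1 := by
  intro j
  induction j with
  | zero => simp [hu0, hu1]
  | succ j ih =>
    rw [pow_succ, ih, sub_mul, smul_mul_assoc, hch, smul_mul_assoc, one_mul, hrec j]
    module

lemma tf_contra (Γ : Subgroup PSL2C) (htf : ∀ x : Γ, x ≠ 1 → ¬IsOfFinOrder x)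
    (x : PSL2C) (hx : x ∈ Γ) (hx1 : x ≠ 1) (k : ℕ) (hk : 0 < k) (hxk : x ^ k = 1) : False := by
  refine htf ⟨x, hx⟩ (fun he => hx1 (congrArg Subtype.val he)) ?_
  rw [isOfFinOrder_iff_pow_eq_one]
  exact ⟨k, hk, Subtype.ext (by simpa using hxk)⟩

lemma no_small_elements (Γ : Subgroup PSL2C) (hdisc : DiscreteTopology Γ)
    (K G : SL2C) (hK : π K ∈ Γ) (hG : π G ∈ Γ)
    (N : M2) (ε r : ℂ) (hε : ε = 1 ∨ ε = -1)
    (hGN : (G : M2) = ε • (1 + N)) (hN : N ≠ 0) (hNtr : Matrix.trace N = 0)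
    (hKN : (K : M2) * N = r • (N * (K : M2))) (hr0 : r ≠ 0) (hr : ‖r‖ < 1) : False := by
  have hε0 : ε ≠ 0 := by rcases hε with h | h <;> simp [h]
  have hpow : ∀ k : ℕ, ((K ^ k : SL2C) : M2) * N = r ^ k • (N * ((K ^ k : SL2C) : M2)) := by
    intro k
    induction k with
    | zero => simp
    | succ k ih =>
      rw [pow_succ, Matrix.SpecialLinearGroup.coe_mul, Matrix.mul_assoc, hKN,
        Matrix.mul_smul, ← Matrix.mul_assoc, ih]
      rw [pow_succ]
      rw [smul_mul_assoc, smul_smul, Matrix.mul_assoc]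
      ring_nf
  set A : ℕ → SL2C := fun k => K ^ k * G * (K ^ k)⁻¹ with hAdef
  have hAmat : ∀ k, ((A k : SL2C) : M2) = ε • (1 + r ^ k • N) := by
    intro k
    have hKinv : ((K ^ k : SL2C) : M2) * (((K ^ k)⁻¹ : SL2C) : M2) = 1 := by
      rw [← Matrix.SpecialLinearGroup.coe_mul, mul_inv_cancel,
        Matrix.SpecialLinearGroup.coe_one]
    have h1 : ((A k : SL2C) : M2) * ((K ^ k : SL2C) : M2)
        = (ε • (1 + r ^ k • N)) * ((K ^ k : SL2C) : M2) := by
      have h3 : (A k) * K ^ k = K ^ k * G := by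
        rw [hAdef]; group
      have h2 := congrArg (fun x : SL2C => (x : M2)) h3
      simp only [Matrix.SpecialLinearGroup.coe_mul] at h2
      rw [h2, hGN]
      rw [Matrix.mul_smul, Matrix.smul_mul, Matrix.mul_add, Matrix.mul_one,
        Matrix.add_mul, Matrix.one_mul, hpow k, smul_mul_assoc]
    calc ((A k : SL2C) : M2)
        = ((A k : SL2C) : M2) * (((K ^ k : SL2C) : M2) * (((K ^ k)⁻¹ : SL2C) : M2)) := by
          rw [hKinv, Matrix.mul_one]
      _ = (ε • (1 + r ^ k • N)) * (((K ^ k : SL2C) : M2) * (((K ^ k)⁻¹ : SL2C) : M2)) := by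
          rw [← Matrix.mul_assoc, h1, Matrix.mul_assoc]
      _ = ε • (1 + r ^ k • N) := by rw [hKinv, Matrix.mul_one]
  have hdetL : Matrix.det (ε • (1 : M2)) = 1 := by
    rcases hε with h | h <;> subst h <;> rw [Matrix.det_smul] <;> norm_num
  set L : SL2C := ⟨ε • 1, hdetL⟩ with hLdef
  have hπL : π L = 1 := by
    apply (QuotientGroup.eq_one_iff _).mpr
    refine Matrix.SpecialLinearGroup.mem_center_iff.mpr ⟨ε, ?_, ?_⟩
    · rcases hε with h | h <;> subst h <;> norm_num
    · rw [Matrix.scalar_apply, ← Matrix.smul_one_eq_diagonal]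
  have hconv : Tendsto (fun k => ((A k : SL2C) : M2)) atTop (𝓝 ((L : SL2C) : M2)) := by
    have h1 : Tendsto (fun k : ℕ => r ^ k) atTop (𝓝 0) :=
      tendsto_pow_atTop_nhds_zero_of_norm_lt_one hr
    have h2 : Tendsto (fun k : ℕ => ε • ((1 : M2) + r ^ k • N)) atTop
        (𝓝 (ε • (1 + (0 : ℂ) • N))) :=
      ((tendsto_const_nhds.add (h1.smul_const N)).const_smul ε)
    simp only [zero_smul, add_zero] at h2
    have h3 : ((L : SL2C) : M2) = ε • (1 : M2) := rfl
    rw [h3]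
    exact Tendsto.congr (fun k => (hAmat k).symm) h2
  have hconvSL : Tendsto A atTop (𝓝 L) := by
    rw [nhds_induced (fun A : SL2C => (A : M2)) L]
    exact tendsto_comap_iff.mpr hconv
  have hconvP : Tendsto (fun k => π (A k)) atTop (𝓝 1) := by
    rw [← hπL]
    exact ((pi_cont.tendsto L).comp hconvSL)
  have hmem : ∀ k, π (A k) ∈ Γ := by
    intro k
    have : π (A k) = (π K) ^ k * π G * ((π K) ^ k)⁻¹ := by
      rw [hAdef]; simp only [_root_.map_mul, map_pow, map_inv]
    rw [this]
    exact Γ.mul_mem (Γ.mul_mem (Γ.pow_mem hK k) hG) (Γ.inv_mem (Γ.pow_mem hK k))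
  set γ : ℕ → Γ := fun k => ⟨π (A k), hmem k⟩ with hγdef
  have hγconv : Tendsto γ atTop (𝓝 (1 : Γ)) := by
    rw [show (1 : Γ) = ⟨1, Γ.one_mem⟩ from rfl, nhds_subtype_eq_comap]
    exact tendsto_comap_iff.mpr hconvP
  rw [nhds_discrete, tendsto_pure] at hγconv
  obtain ⟨k, hk⟩ := hγconv.exists
  have hAk1 : π (A k) = 1 := by
    have := congrArg (fun x : Γ => (x : PSL2C)) hk
    exact this
  have hcen : A k ∈ Subgroup.center SL2C := (QuotientGroup.eq_one_iff _).mp hAk1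
  obtain ⟨ζ, hζpm, hζ⟩ := center_smul hcen
  rw [hAmat k] at hζ
  have htr := congrArg Matrix.trace hζ
  simp only [Matrix.trace_smul, Matrix.trace_add, Matrix.trace_one, hNtr, smul_zero,
    add_zero, smul_eq_mul] at htr
  have hεζ : ε = ζ := by
    simp only [Fintype.card_fin, Nat.cast_ofNat, mul_zero, add_zero] at htr
    linear_combination htr / 2
  rw [← hεζ] at hζ
  have h1 : (1 : M2) + r ^ k • N = 1 := smul_right_injective M2 hε0 hζ
  have h2 : r ^ k • N = 0 := by rwa [add_eq_left] at h1
  rcases smul_eq_zero.mp h2 with h3 | h3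
  · exact pow_ne_zero k hr0 h3
  · exact hN h3

set_option linter.unusedVariables false in
lemma parabolic_case (Γ : Subgroup PSL2C) (hdisc : DiscreteTopology Γ)
    (G H : SL2C) (hG : π G ∈ Γ) (hH : π H ∈ Γ) (hg1 : π G ≠ 1)
    (l : ℂ) (hl2 : l ^ 2 = 1) (ht : Matrix.trace (G : M2) = 2 * l)
    (hch : (G : M2) * (G : M2) = Matrix.trace (G : M2) • (G : M2) - 1)
    (m n : ℕ) (hm : 0 < m) (hn : 0 < n)
    (ζ : ℂ) (hζpm : ζ = 1 ∨ ζ = -1)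
    (hTE : ζ * Matrix.trace ((G : M2) ^ m) = Matrix.trace ((G : M2) ^ n))
    (hME : ζ • ((H : M2) * (G : M2) ^ m) = (G : M2) ^ n * (H : M2)) :
    m = n ∧ (H : M2) * (G : M2) = (G : M2) * (H : M2) := by
  have hε : l = 1 ∨ l = -1 := by
    have h : (l - 1) * (l + 1) = 0 := by linear_combination hl2
    rcases mul_eq_zero.mp h with h | h
    · left; linear_combination h
    · right; linear_combination h
  have hll : l * l = 1 := by linear_combination hl2
  have hl0 : l ≠ 0 := by rcases hε with h | h <;> simp [h]
  set N : M2 := l • (G : M2) - 1 with hNdef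
  have hGN : (G : M2) = l • (1 + N) := by
    have h1 : l • ((1 : M2) + (l • (G : M2) - 1)) = (l * l) • (G : M2) := by module
    rw [hNdef, h1, hll, one_smul]
  have hN2 : N * N = 0 := by
    have h1 : N * N = (l * l) • ((G : M2) * (G : M2)) - (2 * l) • (G : M2) + 1 := by
      rw [hNdef]
      simp only [sub_mul, mul_sub, one_mul, mul_one, smul_mul_assoc, mul_smul_comm, smul_smul]
      module
    rw [hch, ht, hll, one_smul] at h1
    rw [h1]
    module
  have hNtr : Matrix.trace N = 0 := by
    rw [hNdef, Matrix.trace_sub, Matrix.trace_smul, ht, Matrix.trace_one]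
    simp only [smul_eq_mul, Fintype.card_fin]
    push_cast
    linear_combination 2 * hl2
  have hNne : N ≠ 0 := by
    intro h0
    exact hg1 (scalar_pi_one (c := l) (by rw [hGN, h0, add_zero]))
  have hpowG : ∀ k : ℕ, (G : M2) ^ k = l ^ k • (1 + (k : ℂ) • N) := by
    intro k
    rw [hGN, smul_pow, unipotent_pow hN2]
  have htrk : ∀ k : ℕ, Matrix.trace ((G : M2) ^ k) = 2 * l ^ k := by
    intro k
    rw [hpowG k, Matrix.trace_smul, Matrix.trace_add, Matrix.trace_one, Matrix.trace_smul,
      hNtr, smul_zero, add_zero]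
    simp [smul_eq_mul, mul_comm]
  have hζε : ζ * l ^ m = l ^ n := by
    have := hTE
    rw [htrk m, htrk n] at this
    linear_combination this / 2
  have hln0 : l ^ n ≠ 0 := pow_ne_zero _ hl0
  have hKey : (m : ℂ) • ((H : M2) * N) = (n : ℂ) • (N * (H : M2)) := by
    have h1 := hME
    rw [hpowG m, hpowG n] at h1
    rw [mul_smul_comm, smul_smul, hζε, smul_mul_assoc] at h1
    have h2 := smul_right_injective M2 hln0 h1
    rw [mul_add, mul_one, add_mul, one_mul, mul_smul_comm, smul_mul_assoc] at h2
    exact add_left_cancel h2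
  have hHinvH : ((H⁻¹ : SL2C) : M2) * (H : M2) = 1 := by
    rw [← Matrix.SpecialLinearGroup.coe_mul, inv_mul_cancel, Matrix.SpecialLinearGroup.coe_one]
  have hHHinv : (H : M2) * ((H⁻¹ : SL2C) : M2) = 1 := by
    rw [← Matrix.SpecialLinearGroup.coe_mul, mul_inv_cancel, Matrix.SpecialLinearGroup.coe_one]
  rcases lt_trichotomy m n with hlt | rfl | hgt
  · exfalso
    have hKN : ((H⁻¹ : SL2C) : M2) * N = ((m : ℂ) / n) • (N * ((H⁻¹ : SL2C) : M2)) := by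
      have h1 := congrArg
        (fun X : M2 => ((H⁻¹ : SL2C) : M2) * X * ((H⁻¹ : SL2C) : M2)) hKey
      simp only [mul_smul_comm, smul_mul_assoc] at h1
      rw [← Matrix.mul_assoc, ← Matrix.mul_assoc, hHinvH, Matrix.one_mul] at h1
      rw [Matrix.mul_assoc (((H⁻¹ : SL2C) : M2) * N) (H : M2) ((H⁻¹ : SL2C) : M2),
        hHHinv, Matrix.mul_one] at h1
      have hn0 : (n : ℂ) ≠ 0 := Nat.cast_ne_zero.mpr hn.ne'
      rw [div_eq_mul_inv, mul_comm, ← smul_smul]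
      rw [h1, smul_smul, inv_mul_cancel₀ hn0, one_smul]
    have hr0 : ((m : ℂ) / n) ≠ 0 := by
      have hm0 : (m : ℂ) ≠ 0 := Nat.cast_ne_zero.mpr hm.ne'
      have hn0 : (n : ℂ) ≠ 0 := Nat.cast_ne_zero.mpr hn.ne'
      exact div_ne_zero hm0 hn0
    have hrlt : ‖(m : ℂ) / n‖ < 1 := by
      rw [norm_div]
      simp only [Complex.norm_natCast]
      rw [div_lt_one (by exact_mod_cast hn)]
      exact_mod_cast hlt
    exact no_small_elements Γ hdisc H⁻¹ G
      (by rw [show π H⁻¹ = (π H)⁻¹ from map_inv π H]; exact Γ.inv_mem hH) hG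
      N l ((m : ℂ) / n) hε hGN hNne hNtr hKN hr0 hrlt
  · refine ⟨rfl, ?_⟩
    have hm0 : (m : ℂ) ≠ 0 := Nat.cast_ne_zero.mpr hm.ne'
    have hcomm : (H : M2) * N = N * (H : M2) := smul_right_injective M2 hm0 hKey
    rw [hGN, mul_smul_comm, smul_mul_assoc, mul_add, add_mul, mul_one, one_mul, hcomm]
  · exfalso
    have hKN : (H : M2) * N = ((n : ℂ) / m) • (N * (H : M2)) := by
      have hm0 : (m : ℂ) ≠ 0 := Nat.cast_ne_zero.mpr hm.ne'
      rw [div_eq_mul_inv, mul_comm, ← smul_smul]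
      rw [← hKey, smul_smul, inv_mul_cancel₀ hm0, one_smul]
    have hr0 : ((n : ℂ) / m) ≠ 0 := by
      have hn0 : (n : ℂ) ≠ 0 := Nat.cast_ne_zero.mpr hn.ne'
      have hm0 : (m : ℂ) ≠ 0 := Nat.cast_ne_zero.mpr hm.ne'
      exact div_ne_zero hn0 hm0
    have hrlt : ‖(n : ℂ) / m‖ < 1 := by
      rw [norm_div]
      simp only [Complex.norm_natCast]
      rw [div_lt_one (by exact_mod_cast hm)]
      exact_mod_cast hgt
    exact no_small_elements Γ hdisc H G hH hG
      N l ((n : ℂ) / m) hε hGN hNne hNtr hKN hr0 hrlt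

theorem no_conjugate_distinct_powers (Γ : Subgroup PSL2C)
    (hdisc : DiscreteTopology Γ) (htf : ∀ x : Γ, x ≠ 1 → ¬IsOfFinOrder x)
    (g h : PSL2C) (hg : g ∈ Γ) (hh : h ∈ Γ) (hg1 : g ≠ 1)
    (m n : ℕ) (hm : 0 < m) (hn : 0 < n)
    (hconj : h * g ^ m * h⁻¹ = g ^ n) :
    m = n ∧ h * g = g * h := by
  obtain ⟨G, rfl⟩ := pi_surj g
  obtain ⟨H, rfl⟩ := pi_surj h
  have hc : π (H * G ^ m * H⁻¹) = π (G ^ n) := by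
    simpa only [_root_.map_mul, map_pow, map_inv] using hconj
  obtain ⟨z, hzc, hz⟩ := (QuotientGroup.mk'_eq_mk' _).mp hc
  obtain ⟨ζ, hζpm, hζmat⟩ := center_smul hzc
  have hzH : H * z = z * H := Subgroup.mem_center_iff.mp hzc H
  have hE : H * G ^ m * z = G ^ n * H := by
    have h1 := congrArg (· * H) hz
    rw [mul_assoc (H * G ^ m * H⁻¹) z H, ← hzH, ← mul_assoc,
      mul_assoc (H * G ^ m) H⁻¹ H, inv_mul_cancel, mul_one] at h1
    exact h1
  have hME : ζ • ((H : M2) * (G : M2) ^ m) = (G : M2) ^ n * (H : M2) := by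
    have h1 := congrArg (fun x : SL2C => (x : M2)) hE
    simp only [Matrix.SpecialLinearGroup.coe_mul, Matrix.SpecialLinearGroup.coe_pow] at h1
    rw [hζmat] at h1
    calc ζ • ((H : M2) * (G : M2) ^ m) = ((H : M2) * (G : M2) ^ m) * (ζ • (1 : M2)) := by
          rw [mul_smul_comm, mul_one]
      _ = (G : M2) ^ n * (H : M2) := h1
  have hHinvH : ((H⁻¹ : SL2C) : M2) * (H : M2) = 1 := by
    rw [← Matrix.SpecialLinearGroup.coe_mul, inv_mul_cancel, Matrix.SpecialLinearGroup.coe_one]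
  have hTE : ζ * Matrix.trace ((G : M2) ^ m) = Matrix.trace ((G : M2) ^ n) := by
    have h1 := congrArg (fun x : SL2C => (x : M2)) hz
    simp only [Matrix.SpecialLinearGroup.coe_mul, Matrix.SpecialLinearGroup.coe_pow] at h1
    rw [hζmat, mul_smul_comm, mul_one] at h1
    have h2 := congrArg Matrix.trace h1
    rw [Matrix.trace_smul] at h2
    rw [Matrix.trace_mul_comm ((H : M2) * (G : M2) ^ m) ((H⁻¹ : SL2C) : M2)] at h2
    rw [← Matrix.mul_assoc, hHinvH, Matrix.one_mul] at h2
    simpa using h2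
  have hch : (G : M2) * (G : M2) = Matrix.trace (G : M2) • (G : M2) - 1 := ch G
  set t : ℂ := Matrix.trace (G : M2) with htdef
  obtain ⟨s, hs⟩ := IsAlgClosed.exists_pow_nat_eq (t ^ 2 - 4) (n := 2) (by norm_num)
  set l : ℂ := (t + s) / 2 with hldef
  have hl : l ^ 2 - t * l + 1 = 0 := by
    rw [hldef]
    linear_combination hs / 4
  have hl0 : l ≠ 0 := by
    intro h0
    rw [h0] at hl
    simp at hl
  set mu : ℂ := l⁻¹ with hmudef
  have hmu : l * mu = 1 := mul_inv_cancel₀ hl0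
  have hlt : l + mu = t := by
    apply mul_left_cancel₀ hl0
    linear_combination hl + hmu
  by_cases hpar : l ^ 2 = 1
  · -- parabolic (or identity) case
    have ht2 : Matrix.trace (G : M2) = 2 * l := by
      have hmul : mu = l := by
        apply mul_left_cancel₀ hl0
        rw [hmu]
        linear_combination -hpar
      rw [← htdef, ← hlt, hmul]; ring
    obtain ⟨hmn, hcomm⟩ := parabolic_case Γ hdisc G H hg hh hg1 l hpar ht2 hch
      m n hm hn ζ hζpm hTE hME
    refine ⟨hmn, ?_⟩
    have hHG : H * G = G * H := Subtype.ext
      (by simpa only [Matrix.SpecialLinearGroup.coe_mul] using hcomm)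
    rw [← _root_.map_mul, ← _root_.map_mul, hHG]
  · -- diagonalizable case
    have hD : l - mu ≠ 0 := by
      intro h0
      apply hpar
      have : l = mu := by linear_combination h0
      rw [pow_two]
      nth_rewrite 2 [this]
      exact hmu
    set u : ℕ → ℂ := fun j => (l ^ j - mu ^ j) / (l - mu) with hudef
    have hu0 : u 0 = 0 := by simp [hudef]
    have hu1 : u 1 = 1 := by
      simp only [hudef, pow_one]
      exact div_self hD
    have he : ∀ i : ℕ, u i * (l - mu) = l ^ i - mu ^ i := fun i => div_mul_cancel₀ _ hD
    have hurec : ∀ j, u (j + 2) = t * u (j + 1) - u j := by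
      intro j
      apply mul_right_cancel₀ hD
      rw [sub_mul, mul_assoc, he, he, he, ← hlt]
      linear_combination (-(l ^ j - mu ^ j)) * hmu
    have hGpow := pow_formula hch u hu0 hu1 hurec
    have htrpow : ∀ k : ℕ, 0 < k → Matrix.trace ((G : M2) ^ k) = l ^ k + mu ^ k := by
      intro k hk
      obtain ⟨j, rfl⟩ : ∃ j, k = j + 1 := ⟨k - 1, by omega⟩
      rw [hGpow j, Matrix.trace_sub, Matrix.trace_smul, Matrix.trace_smul, Matrix.trace_one,
        ← htdef]
      simp only [smul_eq_mul, Fintype.card_fin, Nat.cast_ofNat]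
      apply mul_right_cancel₀ hD
      rw [sub_mul, show u (j + 1) * t * (l - mu) = u (j + 1) * (l - mu) * t from by ring,
        show u j * 2 * (l - mu) = u j * (l - mu) * 2 from by ring, he, he, ← hlt]
      linear_combination (2 * (l ^ j - mu ^ j)) * hmu
    by_cases hfin : ∃ k : ℕ, l ^ (k + 1) = 1
    · -- root of unity: torsion, contradiction
      exfalso
      obtain ⟨j, hj⟩ := hfin
      have hmuj : mu ^ (j + 1) = 1 := by
        have h1 : (l * mu) ^ (j + 1) = 1 := by rw [hmu, one_pow]
        rwa [mul_pow, hj, one_mul] at h1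
      have huj1 : u (j + 1) = 0 := by
        simp only [hudef]
        rw [hj, hmuj, sub_self, zero_div]
      have hujm : u j = -1 := by
        have hlj : l ^ j = mu := by
          apply mul_left_cancel₀ hl0
          rw [← pow_succ', hj, hmu]
        have hmu0 : mu ≠ 0 := fun h0 => by rw [h0, mul_zero] at hmu; exact zero_ne_one hmu
        have hmj : mu ^ j = l := by
          apply mul_right_cancel₀ hmu0
          rw [← pow_succ, hmuj, hmu]
        simp only [hudef]
        rw [hlj, hmj]
        rw [div_eq_iff hD]
        ring
      have hG1 : (G : M2) ^ (j + 1) = 1 := by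
        rw [hGpow j, huj1, hujm]
        module
      have hG1' : (G : SL2C) ^ (j + 1) = 1 := Subtype.ext
        (by rw [Matrix.SpecialLinearGroup.coe_pow]; simpa using hG1)
      have hπG1 : (π G) ^ (j + 1) = 1 := by rw [← map_pow, hG1', _root_.map_one]
      exact tf_contra Γ htf (π G) hg hg1 (j + 1) (Nat.succ_pos j) hπG1
    · push_neg at hfin
      have hfin' : ∀ k : ℕ, 0 < k → l ^ k ≠ 1 := by
        intro k hk
        obtain ⟨j, rfl⟩ : ∃ j, k = j + 1 := ⟨k - 1, by omega⟩
        exact hfin j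
      have hab : l ^ m * mu ^ m = 1 := by rw [← mul_pow, hmu, one_pow]
      have hcd : l ^ n * mu ^ n = 1 := by rw [← mul_pow, hmu, one_pow]
      have hTE2 : ζ * (l ^ m + mu ^ m) = l ^ n + mu ^ n := by
        rw [← htrpow m hm, ← htrpow n hn]
        exact hTE
      have hmn_and_ζ : m = n ∧ ζ = 1 := by
        rcases hζpm with rfl | rfl
        · -- ζ = 1
          rw [one_mul] at hTE2
          have key : (l ^ m - l ^ n) * (l ^ m - mu ^ n) = 0 := by
            linear_combination l ^ m * hTE2 + hcd - hab
          rcases mul_eq_zero.mp key with h0 | h0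
          · refine ⟨?_, rfl⟩
            rcases lt_trichotomy m n with hlt2 | he | hgt2
            · exfalso
              obtain ⟨d, rfl⟩ := Nat.exists_eq_add_of_lt hlt2
              apply hfin d
              apply mul_left_cancel₀ (pow_ne_zero m hl0)
              rw [mul_one, ← pow_add]
              linear_combination -h0
            · exact he
            · exfalso
              obtain ⟨d, rfl⟩ := Nat.exists_eq_add_of_lt hgt2
              apply hfin d
              apply mul_left_cancel₀ (pow_ne_zero n hl0)
              rw [mul_one, ← pow_add]
              linear_combination h0
          · exfalso
            have h1 : l ^ (m + n) = 1 := by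
              rw [pow_add]
              calc l ^ m * l ^ n = mu ^ n * l ^ n := by
                    rw [sub_eq_zero.mp h0]
                _ = 1 := by rw [← mul_pow, mul_comm mu l, hmu, one_pow]
            exact hfin' (m + n) (by omega) h1
        · -- ζ = -1 : impossible
          exfalso
          have hTE2' : l ^ n + mu ^ n + l ^ m + mu ^ m = 0 := by linear_combination -hTE2
          have key : (l ^ m + l ^ n) * (l ^ m + mu ^ n) = 0 := by
            linear_combination l ^ m * hTE2' + hcd - hab
          rcases mul_eq_zero.mp key with h0 | h0
          · have h2 : (l ^ m) ^ 2 = (l ^ n) ^ 2 := by linear_combination (l ^ m - l ^ n) * h0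
            rcases lt_trichotomy m n with hlt2 | he | hgt2
            · obtain ⟨d, rfl⟩ := Nat.exists_eq_add_of_lt hlt2
              apply hfin' (2 * (d + 1)) (by omega)
              apply mul_left_cancel₀ (pow_ne_zero (2 * m) hl0)
              rw [mul_one, ← pow_add]
              rw [← pow_mul, ← pow_mul] at h2
              rw [show 2 * m + 2 * (d + 1) = (m + d + 1) * 2 from by ring, show 2 * m = m * 2 from by ring]
              linear_combination -h2
            · subst he
              have h3 : (2 : ℂ) * l ^ m = 0 := by linear_combination h0
              have h4 : l ^ m = 0 := by linear_combination h3 / 2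
              exact pow_ne_zero m hl0 h4
            · obtain ⟨d, rfl⟩ := Nat.exists_eq_add_of_lt hgt2
              apply hfin' (2 * (d + 1)) (by omega)
              apply mul_left_cancel₀ (pow_ne_zero (2 * n) hl0)
              rw [mul_one, ← pow_add]
              rw [← pow_mul, ← pow_mul] at h2
              rw [show 2 * n + 2 * (d + 1) = (n + d + 1) * 2 from by ring, show 2 * n = n * 2 from by ring]
              linear_combination h2
          · have h1 : l ^ (m + n) = -1 := by
              rw [pow_add]
              have hdc : mu ^ n * l ^ n = 1 := by rw [← mul_pow, mul_comm mu l, hmu, one_pow]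
              linear_combination l ^ n * h0 - hdc
            apply hfin' (2 * (m + n)) (by omega)
            rw [show 2 * (m + n) = (m + n) * 2 from by ring, pow_mul, h1]
            norm_num
      obtain ⟨hmn, hζ1⟩ := hmn_and_ζ
      subst hmn hζ1
      rw [one_smul] at hME
      have hns : ¬ ∃ c : ℂ, (G : M2) ^ m = c • 1 := by
        rintro ⟨c, hc⟩
        have h1 : π (G ^ m) = 1 := scalar_pi_one
          (by rw [Matrix.SpecialLinearGroup.coe_pow]; exact hc)
        rw [map_pow] at h1
        exact tf_contra Γ htf (π G) hg hg1 m hm h1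
      have hcomm : (H : M2) * (G : M2) = (G : M2) * (H : M2) :=
        commute_of_commute_nonscalar hns hME.symm (pow_mul_comm' (G : M2) m)
      refine ⟨rfl, ?_⟩
      have hHG : H * G = G * H := Subtype.ext
        (by simpa only [Matrix.SpecialLinearGroup.coe_mul] using hcomm)
      rw [← _root_.map_mul, ← _root_.map_mul, hHG]
end

section
/- Let {fₙ : ℤ × ℤ → ℂ} be a sequence of additive group homomorphisms converging pointwise to an additive homomorphism f : ℤ × ℤ → ℂ, where f is injective and the image subgroup f(ℤ × ℤ) is a discrete subset of ℂ. If vₙ ∈ ℤ × ℤ is any sequence such that fₙ(vₙ) converges to some z ∈ ℂ, then z ∈ f(ℤ × ℤ). (That is, for discrete rank-two groups of translations of the plane, every geometric limit of elements of the approximating groups already lies in the algebraic limit group.) -/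
open Matrix Filter Topology

lemma no_real_ratio (a b : ℂ) (ε : ℝ) (hε : 0 < ε)
    (hz : ∀ p q : ℤ, p • a + q • b = 0 → p = 0 ∧ q = 0)
    (hiso : ∀ p q : ℤ, ‖p • a + q • b‖ < ε → p • a + q • b = 0)
    (r : ℝ) (hr : b = r • a) : False := by
  have ha : a ≠ 0 := by
    intro h
    have := hz 1 0 (by simp [h])
    simp at this
  set H : AddSubgroup ℝ := AddSubgroup.closure {1, r} with hH
  have hmem : ∀ x ∈ H, ∃ p q : ℤ, p • (1:ℝ) + q • r = x := fun x hx =>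
    (AddSubgroup.mem_closure_pair).mp hx
  have hsmul : ∀ p q : ℤ, ((p • (1:ℝ) + q • r) • a) = p • a + q • b := by
    intro p q
    rw [hr]
    simp only [zsmul_eq_mul, Complex.real_smul, smul_eq_mul, mul_one]
    push_cast
    ring
  have hisoH : ∀ x ∈ H, |x| < ε / ‖a‖ → x = 0 := by
    intro x hx hxε
    obtain ⟨p, q, hpq⟩ := hmem x hx
    have hn : ‖p • a + q • b‖ < ε := by
      rw [← hsmul, hpq, norm_smul, Real.norm_eq_abs]
      calc |x| * ‖a‖ < (ε / ‖a‖) * ‖a‖ :=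
            mul_lt_mul_of_pos_right hxε (norm_pos_iff.mpr ha)
        _ = ε := div_mul_cancel₀ ε (norm_ne_zero_iff.mpr ha)
    obtain ⟨hp, hq⟩ := hz p q (hiso p q hn)
    rw [← hpq, hp, hq]; simp
  have hεa : 0 < ε / ‖a‖ := div_pos hε (norm_pos_iff.mpr ha)
  rcases H.dense_or_cyclic with hd | ⟨u, hu⟩
  · obtain ⟨x, hxH, hxI⟩ := hd.exists_mem_open isOpen_Ioo
      (Set.nonempty_Ioo.mpr (half_lt_self hεa))
    have hx0 := hisoH x hxH
      (by rw [abs_of_pos (lt_trans (half_pos hεa) hxI.1)]; exact hxI.2)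
    have := half_pos hεa
    rw [hx0] at hxI
    linarith [hxI.1]
  · have h1 : (1:ℝ) ∈ H := AddSubgroup.subset_closure (by simp)
    have hrH : r ∈ H := AddSubgroup.subset_closure (by simp)
    rw [hu] at h1 hrH
    obtain ⟨m, hm⟩ := (AddSubgroup.mem_closure_singleton).mp h1
    obtain ⟨n, hn⟩ := (AddSubgroup.mem_closure_singleton).mp hrH
    have hkey : (n : ℤ) • (1:ℝ) + (-m : ℤ) • r = 0 := by
      rw [← hm, ← hn, smul_smul, smul_smul, ← add_smul,
        show (n*m : ℤ) + (-m)*n = 0 from by ring, zero_smul]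
    have h0 : (n : ℤ) • a + (-m) • b = 0 := by
      rw [← hsmul n (-m), hkey, zero_smul]
    obtain ⟨hn0, hm0⟩ := hz n (-m) h0
    have hm' : m = 0 := by omega
    rw [hm', zero_smul] at hm
    exact one_ne_zero hm.symm


lemma coord_bound (a b : ℂ) (hli : LinearIndependent ℝ ![a, b]) :
    ∃ C : ℝ, 0 < C ∧ ∀ x y : ℝ, max |x| |y| ≤ C * ‖x • a + y • b‖ := by
  have hcard : Fintype.card (Fin 2) = Module.finrank ℝ ℂ := by
    simp [Complex.finrank_real_complex]
  let B := basisOfLinearIndependentOfCardEqFinrank hli hcard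
  have hB : ⇑B = ![a, b] := coe_basisOfLinearIndependentOfCardEqFinrank hli hcard
  have hB0 : B 0 = a := by rw [hB]; rfl
  have hB1 : B 1 = b := by rw [hB]; rfl
  set T := B.equivFunL.toContinuousLinearMap with hT
  refine ⟨‖T‖ + 1, by positivity, fun x y => ?_⟩
  have hrep : B.equivFun (x • a + y • b) = ![x, y] := by
    funext i
    rw [← hB0, ← hB1, map_add, _root_.map_smul, _root_.map_smul]
    fin_cases i <;> simp [Module.Basis.equivFun_self]
  have hle : ∀ i : Fin 2, ‖(![x, y] : Fin 2 → ℝ) i‖ ≤ ‖T (x • a + y • b)‖ := by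
    intro i
    have : T (x • a + y • b) = ![x, y] := hrep
    rw [this]
    exact norm_le_pi_norm _ i
  have hTle : ‖T (x • a + y • b)‖ ≤ ‖T‖ * ‖x • a + y • b‖ := T.le_opNorm _
  have h0 := hle 0
  have h1 := hle 1
  simp only [Matrix.cons_val_zero, Matrix.cons_val_one, Matrix.head_cons,
    Real.norm_eq_abs] at h0 h1
  have : max |x| |y| ≤ ‖T‖ * ‖x • a + y • b‖ :=
    max_le (h0.trans hTle) (h1.trans hTle)
  nlinarith [norm_nonneg (x • a + y • b)]

lemma hom_form (g : (ℤ × ℤ) →+ ℂ) (w : ℤ × ℤ) :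
    g w = w.1 • g (1, 0) + w.2 • g (0, 1) := by
  have : w = w.1 • ((1:ℤ), (0:ℤ)) + w.2 • ((0:ℤ), (1:ℤ)) := by simp [Prod.ext_iff]
  rw [← map_zsmul, ← map_zsmul, ← map_add, ← this]


/-- For discrete rank-two groups of translations of the plane, geometric limits
lie in the algebraic limit: if additive homomorphisms `fₙ : ℤ × ℤ → ℂ` converge pointwise to an
injective `f` with discrete image, and `fₙ(vₙ) → z` for some sequence `vₙ ∈ ℤ × ℤ`, then
`z` lies in the image of `f`. -/
theorem geometric_limit_in_algebraic_limit_planar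
    (f' : ℕ → (ℤ × ℤ) →+ ℂ) (f : (ℤ × ℤ) →+ ℂ)
    (hconv : ∀ v : ℤ × ℤ, Tendsto (fun n => f' n v) atTop (𝓝 (f v)))
    (hinj : Function.Injective f)
    (hdisc : DiscreteTopology f.range)
    (v : ℕ → ℤ × ℤ) (z : ℂ)
    (hz : Tendsto (fun n => f' n (v n)) atTop (𝓝 z)) :
    z ∈ f.range := by
  classical
  set a := f (1, 0) with ha
  set b := f (0, 1) with hb
  clear_value a b
  obtain ⟨ε, hε, hisol⟩ : ∃ ε > 0, ∀ w ∈ f.range, ‖w‖ < ε → w = 0 := by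
    have h0 : IsOpen ({0} : Set f.range) :=
      discreteTopology_iff_isOpen_singleton_zero.mp hdisc
    rw [isOpen_induced_iff] at h0
    obtain ⟨U, hU, hU0⟩ := h0
    have h0U : (0 : ℂ) ∈ U := by
      have : (0 : f.range) ∈ Subtype.val ⁻¹' U := by rw [hU0]; rfl
      simpa using this
    obtain ⟨δ, hδ, hball⟩ := Metric.isOpen_iff.mp hU 0 h0U
    refine ⟨δ, hδ, fun w hw hwδ => ?_⟩
    have : (⟨w, hw⟩ : f.range) ∈ (Subtype.val ⁻¹' U) :=
      hball (by simpa [Metric.mem_ball] using hwδ)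
    rw [hU0] at this
    simpa [Subtype.ext_iff] using this
  have hz0 : ∀ p q : ℤ, p • a + q • b = 0 → p = 0 ∧ q = 0 := by
    intro p q h
    have h1 : f (p, q) = f (0, 0) := by
      rw [hom_form f (p, q), ← ha, ← hb]
      rw [show f (0, 0) = 0 from map_zero f]
      simpa using h
    have := hinj h1
    simpa [Prod.ext_iff] using this
  have hiso' : ∀ p q : ℤ, ‖p • a + q • b‖ < ε → p • a + q • b = 0 := by
    intro p q h
    have hmem : p • a + q • b ∈ f.range := by
      rw [ha, hb, ← hom_form f (p, q)]; exact ⟨(p, q), rfl⟩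
    exact hisol _ hmem h
  have hli : LinearIndependent ℝ ![a, b] := by
    rw [LinearIndependent.pair_iff]
    intro s t hst
    by_cases ht : t = 0
    · subst ht
      rw [zero_smul, add_zero] at hst
      rcases smul_eq_zero.mp hst with hs | ha0
      · exact ⟨hs, rfl⟩
      · exact absurd (hz0 1 0 (by simp [ha0])).1 one_ne_zero
    · exfalso
      apply no_real_ratio a b ε hε hz0 hiso' (-(s/t))
      rw [Complex.real_smul, Complex.real_smul] at hst
      rw [Complex.real_smul]
      have ht' : (t : ℂ) ≠ 0 := by exact_mod_cast ht
      push_cast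
      field_simp
      linear_combination hst
  obtain ⟨C, hC, hbound⟩ := coord_bound a b hli
  set e : ℕ → ℝ := fun n => ‖f' n (1,0) - a‖ + ‖f' n (0,1) - b‖ with he_def
  clear_value e
  have he : Tendsto e atTop (𝓝 0) := by
    have h1 : Tendsto (fun n => ‖f' n (1,0) - a‖) atTop (𝓝 0) := by
      simpa [← ha] using ((hconv (1,0)).sub_const a).norm
    have h2 : Tendsto (fun n => ‖f' n (0,1) - b‖) atTop (𝓝 0) := by
      simpa [← hb] using ((hconv (0,1)).sub_const b).norm
    rw [he_def]
    simpa using h1.add h2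
  have hev1 : ∀ᶠ n in atTop, e n < 1 / (2 * C) :=
    he.eventually (gt_mem_nhds (by positivity))
  have hev2 : ∀ᶠ n in atTop, ‖f' n (v n)‖ < ‖z‖ + 1 :=
    hz.norm.eventually (gt_mem_nhds (lt_add_one _))
  have hM : ∀ᶠ n in atTop,
      max |((v n).1 : ℝ)| |((v n).2 : ℝ)| ≤ 2 * C * (‖z‖ + 1) := by
    filter_upwards [hev1, hev2] with n h1 h2
    have hP : |((v n).1 : ℝ)| ≤ max |((v n).1 : ℝ)| |((v n).2 : ℝ)| := le_max_left _ _
    have hQ : |((v n).2 : ℝ)| ≤ max |((v n).1 : ℝ)| |((v n).2 : ℝ)| := le_max_right _ _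
    have key : ((v n).1 : ℝ) • a + ((v n).2 : ℝ) • b
        = f' n (v n) - ((v n).1 • (f' n (1,0) - a) + (v n).2 • (f' n (0,1) - b)) := by
      rw [hom_form (f' n) (v n), Int.cast_smul_eq_zsmul, Int.cast_smul_eq_zsmul]
      simp only [smul_sub]
      abel
    have hnorm2 : ‖((v n).1 : ℝ) • a + ((v n).2 : ℝ) • b‖
        ≤ ‖f' n (v n)‖ + max |((v n).1 : ℝ)| |((v n).2 : ℝ)| * e n := by
      rw [key]
      refine (norm_sub_le _ _).trans ?_
      gcongr
      refine (norm_add_le _ _).trans ?_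
      rw [← Int.cast_smul_eq_zsmul ℝ, ← Int.cast_smul_eq_zsmul ℝ, norm_smul, norm_smul,
        Real.norm_eq_abs, Real.norm_eq_abs]
      have hen : e n = ‖f' n (1,0) - a‖ + ‖f' n (0,1) - b‖ := by rw [he_def]
      rw [hen]
      nlinarith [hP, hQ, norm_nonneg (f' n (1,0) - a), norm_nonneg (f' n (0,1) - b),
        abs_nonneg ((v n).1 : ℝ), abs_nonneg ((v n).2 : ℝ)]
    have hMle : max |((v n).1 : ℝ)| |((v n).2 : ℝ)|
        ≤ C * (‖f' n (v n)‖ + max |((v n).1 : ℝ)| |((v n).2 : ℝ)| * e n) :=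
      (hbound _ _).trans (mul_le_mul_of_nonneg_left hnorm2 hC.le)
    rw [mul_add] at hMle
    have hM0 : (0:ℝ) ≤ max |((v n).1 : ℝ)| |((v n).2 : ℝ)| :=
      (abs_nonneg _).trans hP
    have hMe : max |((v n).1 : ℝ)| |((v n).2 : ℝ)| * e n
        ≤ max |((v n).1 : ℝ)| |((v n).2 : ℝ)| * (1 / (2*C)) :=
      mul_le_mul_of_nonneg_left h1.le hM0
    have hMe2 : C * (max |((v n).1 : ℝ)| |((v n).2 : ℝ)| * e n)
        ≤ C * (max |((v n).1 : ℝ)| |((v n).2 : ℝ)| * (1 / (2*C))) :=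
      mul_le_mul_of_nonneg_left hMe hC.le
    have heq : C * (max |((v n).1 : ℝ)| |((v n).2 : ℝ)| * (1 / (2*C)))
        = max |((v n).1 : ℝ)| |((v n).2 : ℝ)| / 2 := by
      field_simp
    rw [heq] at hMe2
    have hCF : C * ‖f' n (v n)‖ ≤ C * (‖z‖ + 1) :=
      mul_le_mul_of_nonneg_left h2.le hC.le
    linarith [hMle, hMe2, hCF]
  set R : ℤ := ⌈2 * C * (‖z‖ + 1)⌉ with hR
  set S : Set (ℤ × ℤ) := Set.Icc (-R) R ×ˢ Set.Icc (-R) R with hS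
  have hSfin : S.Finite := (Set.finite_Icc _ _).prod (Set.finite_Icc _ _)
  have hevS : ∀ᶠ n in atTop, v n ∈ S := by
    filter_upwards [hM] with n hn
    have hRle : max |((v n).1 : ℝ)| |((v n).2 : ℝ)| ≤ (R : ℝ) :=
      hn.trans (Int.le_ceil _)
    have h1 : |(v n).1| ≤ R := by
      have := (le_max_left |((v n).1 : ℝ)| |((v n).2 : ℝ)|).trans hRle
      exact_mod_cast this
    have h2 : |(v n).2| ≤ R := by
      have := (le_max_right |((v n).1 : ℝ)| |((v n).2 : ℝ)|).trans hRle
      exact_mod_cast this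
    rw [abs_le] at h1 h2
    exact ⟨⟨h1.1, h1.2⟩, ⟨h2.1, h2.2⟩⟩
  obtain ⟨w, _, hfreq⟩ : ∃ w ∈ S, ∃ᶠ n in atTop, v n = w := by
    by_contra h
    push_neg at h
    have hall : ∀ᶠ n in atTop, ∀ w ∈ S, v n ≠ w :=
      (eventually_all_finite hSfin).mpr fun w hw => h w hw
    obtain ⟨n, hn1, hn2⟩ := (hevS.and hall).exists
    exact hn2 (v n) hn1 rfl
  set l : Filter ℕ := atTop ⊓ 𝓟 {n | v n = w} with hl
  have hne : l.NeBot := frequently_iff_neBot.mp hfreq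
  have h1 : Tendsto (fun n => f' n (v n)) l (𝓝 z) := hz.mono_left inf_le_left
  have h2 : Tendsto (fun n => f' n w) l (𝓝 (f w)) := (hconv w).mono_left inf_le_left
  have heq : (fun n => f' n (v n)) =ᶠ[l] fun n => f' n w :=
    eventually_inf_principal.mpr (Eventually.of_forall fun n hn => by
      show f' n (v n) = f' n w
      rw [hn])
  exact ⟨w, tendsto_nhds_unique h2 (h1.congr' heq)⟩
end
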